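/- In any BDRG A, the following are equivalent: (1) a ∧ (a → b) ≤ b holds for all a, b ∈ A (modus ponens axiom (MP)); (2) a ≤ a • a holds for all a ∈ A (the contraction rule (ct)). -/
import Mathlib


/-- A bounded distributive lattice-ordered residuated groupoid (BDRG):
a bounded distributive lattice with operations `prod` (•), `imp` (→), `limp` (←)
satisfying the residuation law: a • b ≤ c ↔ b ≤ a → c ↔ a ≤ c ← b. -/
structure BDRG (A : Type*) [DistribLattice A] [BoundedOrder A] where
  prod : A → A → A
  imp : A → A → A
  limp : A → A → A
  res_imp : ∀ a b c : A, prod a b ≤ c ↔ b ≤ imp a c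
  res_limp : ∀ a b c : A, prod a b ≤ c ↔ a ≤ limp c b

theorem corr_MP_ct {A : Type*} [DistribLattice A] [BoundedOrder A] (G : BDRG A) :
    (∀ a b : A, a ⊓ G.imp a b ≤ b) ↔ (∀ a : A, a ≤ G.prod a a) := by
  constructor
  · intro mp a
    have h : a ≤ G.imp a (G.prod a a) := (G.res_imp a a (G.prod a a)).mp le_rfl
    calc a = a ⊓ G.imp a (G.prod a a) := (inf_eq_left.mpr h).symm
      _ ≤ G.prod a a := mp a (G.prod a a)
  · intro ct a b
    set x := a ⊓ G.imp a b with hx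
    have h1 : x ≤ G.prod x x := ct x
    -- prod x x ≤ prod a (imp a b) ≤ b
    have hab : G.prod a (G.imp a b) ≤ b := (G.res_imp a (G.imp a b) b).mpr le_rfl
    -- monotone in second arg: prod a x ≤ prod a (imp a b) ≤ b
    have h2 : G.prod a x ≤ b :=
      (G.res_imp a x b).mpr (le_trans inf_le_right ((G.res_imp a (G.imp a b) b).mp hab))
    -- monotone in first arg via limp
    have h3 : G.prod x x ≤ b :=
      (G.res_limp x x b).mpr (le_trans inf_le_left ((G.res_limp a x b).mp h2))
    exact le_trans h1 h3
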